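/- The non-zero eigenvalues of Im V² = (V² − V*²)/(2i) are exactly ±√3/12. -/

import Mathlib

open MeasureTheory Complex ContinuousLinearMap
open scoped InnerProductSpace ComplexConjugate
noncomputable section

abbrev E : Type := Lp ℂ 2 (volume.restrict (Set.Icc (0:ℝ) 1))

def IsVolterra (V : E →L[ℂ] E) : Prop :=
  ∀ f : E, ∀ᵐ x ∂(volume.restrict (Set.Icc (0:ℝ) 1)),
    (V f : ℝ → ℂ) x = ∫ t in (0:ℝ)..x, (f : ℝ → ℂ) t

local notation "μ01" => volume.restrict (Set.Icc (0:ℝ) 1)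

instance : IsFiniteMeasure (volume.restrict (Set.Icc (0:ℝ) 1)) := by
  constructor; simp [Real.volume_Icc]

lemma memOne : MemLp (fun _ : ℝ => (1:ℂ)) 2 μ01 := memLp_const 1

lemma memX : MemLp (fun x : ℝ => (x:ℂ)) 2 μ01 := by
  apply MemLp.of_bound (Complex.measurable_ofReal.aestronglyMeasurable) 1
  filter_upwards [ae_restrict_mem measurableSet_Icc] with x hx
  simp only [Complex.norm_real, Real.norm_eq_abs]
  rw [_root_.abs_of_nonneg hx.1]; exact hx.2

def Uno : E := memOne.toLp _
def Xe : E := memX.toLp _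

lemma Uno_coe : (Uno : ℝ → ℂ) =ᵐ[μ01] fun _ => 1 := memOne.coeFn_toLp
lemma Xe_coe : (Xe : ℝ → ℂ) =ᵐ[μ01] fun x => (x:ℝ) := memX.coeFn_toLp

lemma inner_def' (f g : E) : ⟪f, g⟫_ℂ = ∫ x, conj ((f:ℝ→ℂ) x) * (g:ℝ→ℂ) x ∂μ01 := by
  rw [L2.inner_def]; simp only [RCLike.inner_apply']

lemma integrable_coe (f : E) : Integrable (f : ℝ → ℂ) μ01 :=
  (Lp.memLp f).integrable (by norm_num)

-- real polynomial integrals over μ01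
lemma int_one : (∫ _x, (1:ℂ) ∂μ01) = 1 := by simp [Real.volume_Icc]

lemma int_x : (∫ x, (x:ℂ) ∂μ01) = 1/2 := by
  rw [integral_Icc_eq_integral_Ioc, ← intervalIntegral.integral_of_le zero_le_one,
    intervalIntegral.integral_ofReal]
  norm_num

lemma int_x2 : (∫ x, (x:ℂ)*(x:ℂ) ∂μ01) = 1/3 := by
  have : ∀ x : ℝ, (x:ℂ)*(x:ℂ) = ((x*x : ℝ) : ℂ) := by intro x; push_cast; ring
  simp only [this]
  rw [integral_Icc_eq_integral_Ioc, ← intervalIntegral.integral_of_le zero_le_one,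
    intervalIntegral.integral_ofReal]
  have h2 : ∫ x in (0:ℝ)..1, x * x = 1/3 := by
    rw [show (fun x : ℝ => x * x) = fun x : ℝ => x^2 by funext x; ring,
      integral_pow (a := (0:ℝ)) (b := 1) 2]
    norm_num
  rw [h2]; norm_num

lemma inn_OO : ⟪Uno, Uno⟫_ℂ = 1 := by
  rw [inner_def', ← int_one]
  apply integral_congr_ae
  filter_upwards [Uno_coe] with x h; simp [h]

lemma inn_OX : ⟪Uno, Xe⟫_ℂ = 1/2 := by
  rw [inner_def', ← int_x]
  apply integral_congr_ae
  filter_upwards [Uno_coe, Xe_coe] with x h1 h2; simp [h1, h2]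

lemma inn_XO : ⟪Xe, Uno⟫_ℂ = 1/2 := by
  rw [inner_def', ← int_x]
  apply integral_congr_ae
  filter_upwards [Uno_coe, Xe_coe] with x h1 h2
  simp [h1, h2, Complex.conj_ofReal]

lemma inn_XX : ⟪Xe, Xe⟫_ℂ = 1/3 := by
  rw [inner_def', ← int_x2]
  apply integral_congr_ae
  filter_upwards [Xe_coe] with x h; simp [h, Complex.conj_ofReal]

lemma ae_interval_congr {f g : ℝ → ℂ} (h : f =ᵐ[μ01] g) :
    ∀ᵐ x ∂μ01, (∫ t in (0:ℝ)..x, f t) = ∫ t in (0:ℝ)..x, g t := by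
  filter_upwards [ae_restrict_mem measurableSet_Icc] with x hx
  apply intervalIntegral.integral_congr_ae
  rw [Set.uIoc_of_le hx.1]
  have h' : ∀ᵐ t ∂(volume.restrict (Set.Ioc 0 x)), f t = g t :=
    ae_restrict_of_ae_restrict_of_subset
      (Set.Ioc_subset_Icc_self.trans (Set.Icc_subset_Icc_right hx.2)) h
  exact (ae_restrict_iff' measurableSet_Ioc).1 h'

lemma V_one {V : E →L[ℂ] E} (hV : IsVolterra V) : V Uno = Xe := by
  apply Lp.ext
  filter_upwards [hV Uno, Xe_coe, ae_interval_congr Uno_coe,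
    ae_restrict_mem measurableSet_Icc] with x h1 h2 h3 h4
  rw [h1, h2, h3]
  simp

lemma integrable_conj' {ν : Measure ℝ} {f : ℝ → ℂ} (h : Integrable f ν) :
    Integrable (fun x => conj (f x)) ν := by
  refine ⟨RCLike.continuous_conj.comp_aestronglyMeasurable h.1, ?_⟩
  simpa [HasFiniteIntegral] using h.2

lemma sub01 {x : ℝ} (hx : x ∈ Set.Icc (0:ℝ) 1) : Set.Ioc 0 x ⊆ Set.Icc 0 1 :=
  Set.Ioc_subset_Icc_self.trans (Set.Icc_subset_Icc_right hx.2)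

/-- helper: inner products against `V v` as a double-integral with Ioc indicator. -/
lemma helperIoc {V : E →L[ℂ] E} (hV : IsVolterra V) (u v : E) :
    ⟪u, V v⟫_ℂ = ∫ p, {p : ℝ × ℝ | p.2 ∈ Set.Ioc 0 p.1}.indicator
      (fun p => conj ((u : ℝ → ℂ) p.1) * (v : ℝ → ℂ) p.2) p ∂((volume.restrict (Set.Icc (0:ℝ) 1)).prod μ01) := by
  have hS : MeasurableSet {p : ℝ × ℝ | p.2 ∈ Set.Ioc 0 p.1} :=
    (measurableSet_lt measurable_const measurable_snd).inter
      (measurableSet_le measurable_snd measurable_fst)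
  have hbase : Integrable (fun p : ℝ × ℝ => conj ((u : ℝ → ℂ) p.1) * (v : ℝ → ℂ) p.2)
      ((volume.restrict (Set.Icc (0:ℝ) 1)).prod (volume.restrict (Set.Icc (0:ℝ) 1))) :=
    (integrable_conj' (integrable_coe u)).mul_prod (integrable_coe v)
  have hint : Integrable (Function.uncurry fun x t =>
      {p : ℝ × ℝ | p.2 ∈ Set.Ioc 0 p.1}.indicator
        (fun p => conj ((u : ℝ → ℂ) p.1) * (v : ℝ → ℂ) p.2) (x, t)) ((volume.restrict (Set.Icc (0:ℝ) 1)).prod (volume.restrict (Set.Icc (0:ℝ) 1))) :=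
    hbase.indicator hS
  rw [inner_def', ← MeasureTheory.integral_integral hint]
  apply integral_congr_ae
  filter_upwards [hV v, ae_restrict_mem measurableSet_Icc] with x h1 h2
  rw [h1, intervalIntegral.integral_of_le h2.1]
  have hres : (volume.restrict (Set.Icc (0:ℝ) 1)).restrict (Set.Ioc 0 x) = volume.restrict (Set.Ioc 0 x) := by
    rw [Measure.restrict_restrict measurableSet_Ioc,
      Set.inter_eq_self_of_subset_left (sub01 h2)]
  have : ∫ t in Set.Ioc 0 x, (v : ℝ → ℂ) t ∂volume
      = ∫ t, (Set.Ioc 0 x).indicator (v : ℝ → ℂ) t ∂μ01 := by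
    rw [integral_indicator measurableSet_Ioc, hres]
  rw [this, ← integral_const_mul]
  apply integral_congr_ae
  filter_upwards with t
  by_cases ht : t ∈ Set.Ioc 0 x
  · rw [Set.indicator_of_mem ht, Set.indicator_of_mem (by exact ht)]
  · rw [Set.indicator_of_notMem ht, Set.indicator_of_notMem (by exact ht), mul_zero]

/-- helper: Ioo version. -/
lemma helperIoo {V : E →L[ℂ] E} (hV : IsVolterra V) (u v : E) :
    ⟪u, V v⟫_ℂ = ∫ p, {p : ℝ × ℝ | p.2 ∈ Set.Ioo 0 p.1}.indicator
      (fun p => conj ((u : ℝ → ℂ) p.1) * (v : ℝ → ℂ) p.2) p ∂((volume.restrict (Set.Icc (0:ℝ) 1)).prod μ01) := by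
  have hS : MeasurableSet {p : ℝ × ℝ | p.2 ∈ Set.Ioo 0 p.1} :=
    (measurableSet_lt measurable_const measurable_snd).inter
      (measurableSet_lt measurable_snd measurable_fst)
  have hbase : Integrable (fun p : ℝ × ℝ => conj ((u : ℝ → ℂ) p.1) * (v : ℝ → ℂ) p.2)
      ((volume.restrict (Set.Icc (0:ℝ) 1)).prod (volume.restrict (Set.Icc (0:ℝ) 1))) :=
    (integrable_conj' (integrable_coe u)).mul_prod (integrable_coe v)
  have hint : Integrable (Function.uncurry fun x t =>
      {p : ℝ × ℝ | p.2 ∈ Set.Ioo 0 p.1}.indicator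
        (fun p => conj ((u : ℝ → ℂ) p.1) * (v : ℝ → ℂ) p.2) (x, t)) ((volume.restrict (Set.Icc (0:ℝ) 1)).prod (volume.restrict (Set.Icc (0:ℝ) 1))) :=
    hbase.indicator hS
  rw [inner_def', ← MeasureTheory.integral_integral hint]
  apply integral_congr_ae
  filter_upwards [hV v, ae_restrict_mem measurableSet_Icc] with x h1 h2
  rw [h1, intervalIntegral.integral_of_le h2.1, integral_Ioc_eq_integral_Ioo]
  have hres : (volume.restrict (Set.Icc (0:ℝ) 1)).restrict (Set.Ioo 0 x) = volume.restrict (Set.Ioo 0 x) := by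
    rw [Measure.restrict_restrict measurableSet_Ioo,
      Set.inter_eq_self_of_subset_left (Set.Ioo_subset_Ioc_self.trans (sub01 h2))]
  have : ∫ t in Set.Ioo 0 x, (v : ℝ → ℂ) t ∂volume
      = ∫ t, (Set.Ioo 0 x).indicator (v : ℝ → ℂ) t ∂μ01 := by
    rw [integral_indicator measurableSet_Ioo, hres]
  rw [this, ← integral_const_mul]
  apply integral_congr_ae
  filter_upwards with t
  by_cases ht : t ∈ Set.Ioo 0 x
  · rw [Set.indicator_of_mem ht, Set.indicator_of_mem (by exact ht)]
  · rw [Set.indicator_of_notMem ht, Set.indicator_of_notMem (by exact ht), mul_zero]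

lemma ae_pos_prod : ∀ᵐ p ∂((volume.restrict (Set.Icc (0:ℝ) 1)).prod
    (volume.restrict (Set.Icc (0:ℝ) 1))), 0 < p.1 ∧ 0 < p.2 := by
  have h0 : (volume.restrict (Set.Icc (0:ℝ) 1)) {x : ℝ | ¬ 0 < x} = 0 := by
    have he : {x : ℝ | ¬ 0 < x} = Set.Iic 0 := by ext x; simp
    rw [he, Measure.restrict_apply measurableSet_Iic]
    have he2 : Set.Iic (0:ℝ) ∩ Set.Icc 0 1 = {0} := by
      ext x
      simp only [Set.mem_inter_iff, Set.mem_Iic, Set.mem_Icc, Set.mem_singleton_iff]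
      constructor
      · rintro ⟨h1, h2, _⟩; linarith
      · rintro rfl; norm_num
    rw [he2]; simp
  have h1 : ∀ᵐ p ∂((volume.restrict (Set.Icc (0:ℝ) 1)).prod
      (volume.restrict (Set.Icc (0:ℝ) 1))), 0 < p.1 := by
    rw [ae_iff]
    exact measure_mono_null
      (show {p : ℝ × ℝ | ¬ 0 < p.1} ⊆ {x:ℝ|¬0<x} ×ˢ (Set.univ : Set ℝ) from
        fun p hp => ⟨hp, trivial⟩)
      (by rw [Measure.prod_prod, h0, zero_mul])
  have h2 : ∀ᵐ p ∂((volume.restrict (Set.Icc (0:ℝ) 1)).prod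
      (volume.restrict (Set.Icc (0:ℝ) 1))), 0 < p.2 := by
    rw [ae_iff]
    exact measure_mono_null
      (show {p : ℝ × ℝ | ¬ 0 < p.2} ⊆ (Set.univ : Set ℝ) ×ˢ {x:ℝ|¬0<x} from
        fun p hp => ⟨trivial, hp⟩)
      (by rw [Measure.prod_prod, h0, mul_zero])
  exact h1.and h2

lemma core {V : E →L[ℂ] E} (hV : IsVolterra V) (f g : E) :
    ⟪g, V f⟫_ℂ + ⟪V g, f⟫_ℂ = ⟪g, Uno⟫_ℂ * ⟪Uno, f⟫_ℂ := by
  set F : ℝ → ℂ := (f : ℝ → ℂ)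
  set G : ℝ → ℂ := (g : ℝ → ℂ)
  set base : ℝ × ℝ → ℂ := fun p => conj (G p.1) * F p.2 with hbase_def
  have hbase : Integrable base ((volume.restrict (Set.Icc (0:ℝ) 1)).prod
      (volume.restrict (Set.Icc (0:ℝ) 1))) :=
    (integrable_conj' (integrable_coe g)).mul_prod (integrable_coe f)
  have hS1 : MeasurableSet {p : ℝ × ℝ | p.2 ∈ Set.Ioc 0 p.1} :=
    (measurableSet_lt measurable_const measurable_snd).inter
      (measurableSet_le measurable_snd measurable_fst)
  have hS2 : MeasurableSet {p : ℝ × ℝ | p.1 ∈ Set.Ioo 0 p.2} :=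
    (measurableSet_lt measurable_const measurable_fst).inter
      (measurableSet_lt measurable_fst measurable_snd)
  have h1 := helperIoc hV g f
  have h2 : ⟪V g, f⟫_ℂ = ∫ p, {p : ℝ × ℝ | p.1 ∈ Set.Ioo 0 p.2}.indicator base p
      ∂((volume.restrict (Set.Icc (0:ℝ) 1)).prod (volume.restrict (Set.Icc (0:ℝ) 1))) := by
    calc ⟪V g, f⟫_ℂ = conj ⟪f, V g⟫_ℂ := (inner_conj_symm (V g) f).symm
    _ = conj (∫ p, {p : ℝ × ℝ | p.2 ∈ Set.Ioo 0 p.1}.indicator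
          (fun p => conj (F p.1) * G p.2) p
          ∂((volume.restrict (Set.Icc (0:ℝ) 1)).prod (volume.restrict (Set.Icc (0:ℝ) 1)))) := by
        rw [helperIoo hV f g]
    _ = ∫ p, conj ({p : ℝ × ℝ | p.2 ∈ Set.Ioo 0 p.1}.indicator
          (fun p => conj (F p.1) * G p.2) p)
          ∂((volume.restrict (Set.Icc (0:ℝ) 1)).prod (volume.restrict (Set.Icc (0:ℝ) 1))) := by
        rw [integral_conj]
    _ = ∫ p, ({p : ℝ × ℝ | p.1 ∈ Set.Ioo 0 p.2}.indicator base) p.swap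
          ∂((volume.restrict (Set.Icc (0:ℝ) 1)).prod (volume.restrict (Set.Icc (0:ℝ) 1))) := by
        apply integral_congr_ae
        filter_upwards with p
        by_cases hp : p.2 ∈ Set.Ioo 0 p.1
        · rw [Set.indicator_of_mem (show p ∈ {q : ℝ × ℝ | q.2 ∈ Set.Ioo 0 q.1} from hp),
            Set.indicator_of_mem (show p.swap ∈ {q : ℝ × ℝ | q.1 ∈ Set.Ioo 0 q.2} from hp)]
          simp [hbase_def, mul_comm]
        · rw [Set.indicator_of_notMem (show p ∉ {q : ℝ × ℝ | q.2 ∈ Set.Ioo 0 q.1} from hp),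
            Set.indicator_of_notMem (show p.swap ∉ {q : ℝ × ℝ | q.1 ∈ Set.Ioo 0 q.2} from hp),
            map_zero]
    _ = _ := integral_prod_swap _
  rw [h1, h2, ← integral_add (hbase.indicator hS1) (hbase.indicator hS2)]
  have hsum : (∫ p, ({p : ℝ × ℝ | p.2 ∈ Set.Ioc 0 p.1}.indicator base p
        + {p : ℝ × ℝ | p.1 ∈ Set.Ioo 0 p.2}.indicator base p)
      ∂((volume.restrict (Set.Icc (0:ℝ) 1)).prod (volume.restrict (Set.Icc (0:ℝ) 1))))
      = ∫ p, base p
      ∂((volume.restrict (Set.Icc (0:ℝ) 1)).prod (volume.restrict (Set.Icc (0:ℝ) 1))) := by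
    apply integral_congr_ae
    filter_upwards [ae_pos_prod] with p hp
    rcases le_or_gt p.2 p.1 with hle | hlt
    · rw [Set.indicator_of_mem (show p ∈ {q : ℝ × ℝ | q.2 ∈ Set.Ioc 0 q.1} from ⟨hp.2, hle⟩),
        Set.indicator_of_notMem (show p ∉ {q : ℝ × ℝ | q.1 ∈ Set.Ioo 0 q.2} from
          fun h => absurd h.2 (not_lt.2 hle)), add_zero]
    · rw [Set.indicator_of_notMem (show p ∉ {q : ℝ × ℝ | q.2 ∈ Set.Ioc 0 q.1} from
          fun h => absurd h.2 (not_le.2 hlt)),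
        Set.indicator_of_mem (show p ∈ {q : ℝ × ℝ | q.1 ∈ Set.Ioo 0 q.2} from ⟨hp.1, hlt⟩),
        zero_add]
  rw [hsum, hbase_def, integral_prod_mul (fun x => conj (G x)) F]
  congr 1
  · rw [inner_def']
    apply integral_congr_ae
    filter_upwards [Uno_coe] with x h; simp [h, G]
  · rw [inner_def']
    apply integral_congr_ae
    filter_upwards [Uno_coe] with x h; simp [h, F]

def Pop : E →L[ℂ] E := (innerSL ℂ Uno).smulRight Uno
def Qop : E →L[ℂ] E := (innerSL ℂ Uno).smulRight Xe - (innerSL ℂ Xe).smulRight Uno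

lemma adjV {V : E →L[ℂ] E} (hV : IsVolterra V) : adjoint V = Pop - V := by
  apply ContinuousLinearMap.ext; intro f
  apply ext_inner_left ℂ; intro g
  rw [adjoint_inner_right]
  simp only [sub_apply, Pop, smulRight_apply, innerSL_apply_apply]
  rw [inner_sub_right, inner_smul_right]
  linear_combination core hV f g

lemma inner_one_V {V : E →L[ℂ] E} (hV : IsVolterra V) (f : E) :
    ⟪Uno, V f⟫_ℂ = ⟪Uno, f⟫_ℂ - ⟪Xe, f⟫_ℂ := by
  have h := core hV f Uno
  rw [V_one hV, inn_OO] at h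
  linear_combination h

lemma keyop {V : E →L[ℂ] E} (hV : IsVolterra V) :
    V^2 - adjoint (V^2) = Qop := by
  have hadj : adjoint (V^2) = (Pop - V)^2 := by
    rw [← star_eq_adjoint, star_pow, star_eq_adjoint, adjV hV]
  rw [hadj]
  have expand : (Pop - V)^2 = Pop*Pop - Pop*V - V*Pop + V*V := by noncomm_ring
  have hpow : V^2 = V*V := sq V
  rw [expand, hpow]
  apply ContinuousLinearMap.ext; intro f
  simp only [sub_apply, add_apply, ContinuousLinearMap.mul_apply, Qop, Pop, smulRight_apply,
    innerSL_apply_apply]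
  rw [inner_one_V hV, inner_smul_right, inn_OO, _root_.map_smul, V_one hV]
  module

lemma Qop_apply (f : E) : Qop f = ⟪Uno, f⟫_ℂ • Xe - ⟪Xe, f⟫_ℂ • Uno := by
  simp [Qop, smulRight_apply, innerSL_apply_apply]

lemma indep (a : ℂ) : a • Uno + Xe ≠ 0 := by
  intro h
  have h1 : (fun x : ℝ => a + (x:ℂ)) =ᵐ[μ01] 0 := by
    have e1 := Lp.coeFn_add (a • Uno) Xe
    have e2 := Lp.coeFn_smul a Uno
    rw [h] at e1
    filter_upwards [e1.symm, e2, Uno_coe, Xe_coe, Lp.coeFn_zero (E := ℂ) (p := 2) (μ := μ01)]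
      with x k1 k2 k3 k4 k5
    have : (a • Uno + Xe : E) = (0 : E) := h
    calc a + (x:ℂ) = a • (1:ℂ) + (x:ℂ) := by simp
    _ = a • ((Uno : ℝ → ℂ) x) + (Xe : ℝ → ℂ) x := by rw [k3, k4]
    _ = ((a • Uno : E) : ℝ → ℂ) x + (Xe : ℝ → ℂ) x := by rw [k2]; rfl
    _ = ((0 : E) : ℝ → ℂ) x := by rw [← k1]; rfl
    _ = 0 := by rw [k5]; rfl
  have h2 : ∀ᵐ (x : ℝ) ∂(volume.restrict (Set.Icc (0:ℝ) 1)), (x : ℂ) = -a := by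
    filter_upwards [h1] with x hx
    have hx' : a + (x:ℂ) = 0 := hx
    linear_combination hx'
  have h3 : (volume.restrict (Set.Icc (0:ℝ) 1)) {x : ℝ | ¬ (x:ℂ) = -a} = 0 := by
    rw [← ae_iff]; exact h2
  have h4 : (volume.restrict (Set.Icc (0:ℝ) 1)) {x : ℝ | (x:ℂ) = -a} = 0 := by
    have hsub : {x : ℝ | (x:ℂ) = -a} ⊆ {(-a).re} := by
      intro x hx
      have := congrArg Complex.re hx
      simpa using this
    refine measure_mono_null hsub ?_
    rw [Measure.restrict_apply (measurableSet_singleton _)]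
    exact measure_mono_null Set.inter_subset_left Real.volume_singleton
  have h5 : (volume.restrict (Set.Icc (0:ℝ) 1)) Set.univ = 0 := by
    have hu : (Set.univ : Set ℝ) = {x : ℝ | (x:ℂ) = -a} ∪ {x : ℝ | ¬ (x:ℂ) = -a} := by
      ext x; by_cases hx : (x:ℂ) = -a <;> simp [hx]
    rw [hu]
    exact le_antisymm ((measure_union_le _ _).trans (by rw [h3, h4]; norm_num))
      zero_le
  rw [Measure.restrict_apply_univ] at h5
  simp [Real.volume_Icc] at h5

lemma hInv2I : (2*Complex.I)⁻¹ = -Complex.I/2 := by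
  refine inv_eq_of_mul_eq_one_right ?_
  have : Complex.I * Complex.I = -1 := Complex.I_mul_I
  linear_combination -this

lemma eig_of_sq {V : E →L[ℂ] E} (hV : IsVolterra V) {μ : ℂ} (hμ : μ^2 = 1/48) :
    Module.End.HasEigenvalue
      ((((2 * Complex.I)⁻¹ : ℂ) • (V ^ 2 - ContinuousLinearMap.adjoint (V ^ 2)) : E →L[ℂ] E)
        : E →ₗ[ℂ] E) μ := by
  set w : E := (2*Complex.I*μ - 1/2) • Uno + Xe with hw
  apply Module.End.hasEigenvalue_of_hasEigenvector (x := w)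
  constructor
  · rw [Module.End.mem_eigenspace_iff]
    simp only [ContinuousLinearMap.coe_coe]
    rw [keyop hV, ContinuousLinearMap.smul_apply, Qop_apply]
    have hc1 : ⟪Uno, w⟫_ℂ = 2*Complex.I*μ := by
      rw [hw, inner_add_right, inner_smul_right, inn_OO, inn_OX]; ring
    have hc2 : ⟪Xe, w⟫_ℂ = Complex.I*μ + 1/12 := by
      rw [hw, inner_add_right, inner_smul_right, inn_XO, inn_XX]; ring
    rw [hc1, hc2, hInv2I, hw]
    have hI : Complex.I * Complex.I = -1 := Complex.I_mul_I
    match_scalars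
    · linear_combination (-μ) * hI
    · linear_combination (μ/2) * hI + (-2*Complex.I) * hμ
  · exact indep _

theorem im_volterra_sq_eigenvalues (V : E →L[ℂ] E) (hV : IsVolterra V) :
    {μ : ℂ | μ ≠ 0 ∧ Module.End.HasEigenvalue
        ((((2 * Complex.I)⁻¹ : ℂ) • (V ^ 2 - ContinuousLinearMap.adjoint (V ^ 2)) : E →L[ℂ] E) : E →ₗ[ℂ] E) μ} =
      {((Real.sqrt 3 / 12 : ℝ) : ℂ), (-(Real.sqrt 3 / 12 : ℝ) : ℂ)} := by
  have h3 : Real.sqrt 3 ^ 2 = 3 := Real.sq_sqrt (by norm_num)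
  have hs2 : ((Real.sqrt 3 / 12 : ℝ) : ℂ)^2 = 1/48 := by
    have hr : (Real.sqrt 3 / 12 : ℝ)^2 = 1/48 := by
      rw [div_pow, h3]; norm_num
    calc ((Real.sqrt 3 / 12 : ℝ) : ℂ)^2 = (((Real.sqrt 3 / 12 : ℝ)^2 : ℝ) : ℂ) := by
          push_cast; ring
    _ = 1/48 := by rw [hr]; norm_num
  have hsne : ((Real.sqrt 3 / 12 : ℝ) : ℂ) ≠ 0 := by
    simp only [ne_eq, Complex.ofReal_eq_zero, div_eq_zero_iff]
    push_neg
    constructor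
    · positivity
    · norm_num
  ext μ
  simp only [Set.mem_setOf_eq, Set.mem_insert_iff, Set.mem_singleton_iff]
  constructor
  · rintro ⟨hμ0, heig⟩
    obtain ⟨w, hw⟩ := heig.exists_hasEigenvector
    have hwe := hw.apply_eq_smul
    simp only [ContinuousLinearMap.coe_coe] at hwe
    have hwne : w ≠ 0 := hw.right
    rw [keyop hV, ContinuousLinearMap.smul_apply, Qop_apply, hInv2I] at hwe
    have hI : Complex.I * Complex.I = -1 := Complex.I_mul_I
    have g1 : (-Complex.I/2) * (⟪Uno, w⟫_ℂ * (1/2) - ⟪Xe, w⟫_ℂ) = μ * ⟪Uno, w⟫_ℂ := by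
      have h' := congrArg (fun z => (⟪Uno, z⟫_ℂ)) hwe
      simp only [inner_smul_right, inner_sub_right, inn_OX, inn_OO] at h'
      linear_combination h'
    have g2 : (-Complex.I/2) * (⟪Uno, w⟫_ℂ * (1/3) - ⟪Xe, w⟫_ℂ * (1/2)) = μ * ⟪Xe, w⟫_ℂ := by
      have h' := congrArg (fun z => (⟪Xe, z⟫_ℂ)) hwe
      simp only [inner_smul_right, inner_sub_right, inn_XX, inn_XO] at h'
      linear_combination h'
    have hc1ne : ⟪Uno, w⟫_ℂ ≠ 0 := by
      intro h0
      have hc2z : ⟪Xe, w⟫_ℂ = 0 := by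
        rw [h0] at g1
        have h2 : (Complex.I/2) * ⟪Xe, w⟫_ℂ = 0 := by linear_combination g1
        rcases mul_eq_zero.1 h2 with h | h
        · exact absurd h (div_ne_zero Complex.I_ne_zero two_ne_zero)
        · exact h
      apply hwne
      rw [h0, hc2z] at hwe
      have hz : μ • w = 0 := by rw [← hwe]; simp
      exact (smul_eq_zero.1 hz).resolve_left hμ0
    have hc2v : ⟪Xe, w⟫_ℂ = -2*Complex.I*μ*⟪Uno, w⟫_ℂ + ⟪Uno, w⟫_ℂ/2 := by
      linear_combination (-2*Complex.I) * g1 + (⟪Xe, w⟫_ℂ - ⟪Uno, w⟫_ℂ/2) * hI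
    rw [hc2v] at g2
    have key : ⟪Uno, w⟫_ℂ * (μ^2 - 1/48) * (2*Complex.I) = 0 := by
      linear_combination g2 + (μ * ⟪Uno, w⟫_ℂ / 2) * hI
    have hμsq : μ^2 = 1/48 := by
      have h2I : (2*Complex.I) ≠ 0 := by simp [Complex.I_ne_zero]
      have := (mul_eq_zero.1 key).resolve_right h2I
      have := (mul_eq_zero.1 this).resolve_left hc1ne
      linear_combination this
    have hfac : (μ - ((Real.sqrt 3 / 12 : ℝ) : ℂ)) * (μ + ((Real.sqrt 3 / 12 : ℝ) : ℂ)) = 0 := by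
      linear_combination hμsq - hs2
    rcases mul_eq_zero.1 hfac with h | h
    · left; linear_combination h
    · right; linear_combination h
  · rintro (rfl | rfl)
    · exact ⟨hsne, eig_of_sq hV hs2⟩
    · refine ⟨neg_ne_zero.2 hsne, eig_of_sq hV ?_⟩
      linear_combination hs2
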